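/- arXiv:1802.05906 — 2 statements merged into one kernel-verified Lean document; each statement's English description precedes it below -/
import Mathlib

section
/- Let 1 ≤ k ≤ n and let c be a character with c ≠ $. Suppose there exists a position p > k with BWT[p] = c, and let p be the smallest such position. Then SA[p] > 1, and the suffix T[SA[p]−1..n] is the lexicographically smallest suffix of T that is strictly greater than the string c · T[SA[k]..n] (the concatenation of the character c with the suffix T[SA[k]..n]). -/
variable {α : Type*} [LinearOrder α]

/-- The suffix `T[p..n]` of a 1-indexed string `T[1..n]`, as a list. -/
def sfx (T : ℕ → α) (n p : ℕ) : List α :=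
  (List.range (n + 1 - p)).map (fun d => T (p + d))

/-- The Burrows–Wheeler transform determined by the text `T`, its suffix array `SA`,
and the end-of-string character `dollar`:  `BWT[i] = T[SA[i]-1]` if `SA[i] > 1`,
and `BWT[i] = $` if `SA[i] = 1`. -/
def bwt (T : ℕ → α) (SA : ℕ → ℕ) (dollar : α) (i : ℕ) : α :=
  if SA i = 1 then dollar else T (SA i - 1)

lemma sfx_cons (T : ℕ → α) {n p : ℕ} (h : 1 ≤ p) (h2 : p ≤ n) :
    sfx T n p = T p :: sfx T n (p + 1) := by
  unfold sfx
  have h3 : n + 1 - p = (n + 1 - (p + 1)) + 1 := by omega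
  rw [h3, List.range_succ_eq_map, List.map_cons, List.map_map]
  refine congrArg₂ _ (by simp) (List.map_congr_left ?_)
  intro d _
  simp only [Function.comp_apply]
  congr 1
  omega

lemma cons_lt_cases {a b : α} {l m : List α} (h : a :: l < b :: m) :
    a < b ∨ (a = b ∧ l < m) := by
  cases h with
  | rel h => exact Or.inl h
  | cons h => exact Or.inr ⟨rfl, h⟩

/-- If `p > k` is the smallest position with `BWT[p] = c ≠ $`, then
`SA[p] > 1` and `T[SA[p]-1..n]` is the lexicographically smallest suffix of `T`
strictly greater than `c · T[SA[k]..n]`. -/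
theorem statement1
    (n : ℕ) (T : ℕ → α) (dollar : α) (SA : ℕ → ℕ)
    -- `T[1..n]` is a string of length `n ≥ 1` ending with `$`,
    -- which is smaller than every other character and occurs only at position `n`
    (hn : 1 ≤ n) (hTn : T n = dollar)
    (hdollar : ∀ p, 1 ≤ p → p < n → dollar < T p)
    -- `SA` is a permutation of `{1,...,n}` sorting the suffixes lexicographically
    (hSAran : ∀ i, 1 ≤ i → i ≤ n → 1 ≤ SA i ∧ SA i ≤ n)
    (hSAsurj : ∀ p, 1 ≤ p → p ≤ n → ∃ i, 1 ≤ i ∧ i ≤ n ∧ SA i = p)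
    (hSAmono : ∀ i j, 1 ≤ i → i < j → j ≤ n → sfx T n (SA i) < sfx T n (SA j))
    (k : ℕ) (hk1 : 1 ≤ k) (hk2 : k ≤ n)
    (c : α) (hc : c ≠ dollar)
    (p : ℕ) (hp1 : k < p) (hp2 : p ≤ n) (hpc : bwt T SA dollar p = c)
    (hpmin : ∀ q, k < q → q ≤ n → bwt T SA dollar q = c → p ≤ q) :
    1 < SA p ∧
    c :: sfx T n (SA k) < sfx T n (SA p - 1) ∧
    ∀ q, 1 ≤ q → q ≤ n → c :: sfx T n (SA k) < sfx T n q →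
      sfx T n (SA p - 1) ≤ sfx T n q := by
  have hSApos := hSAran p (by omega) hp2
  have hSAp1 : SA p ≠ 1 := by
    intro h
    rw [bwt, if_pos h] at hpc
    exact hc hpc.symm
  have h1 : 1 < SA p := by omega
  have hTc : T (SA p - 1) = c := by rw [bwt, if_neg hSAp1] at hpc; exact hpc
  have hd1 : sfx T n (SA p - 1) = c :: sfx T n (SA p) := by
    rw [sfx_cons T (by omega) (by omega), hTc]
    congr 2
    omega
  -- key lemma: derive index inequality from suffix inequality
  have key : ∀ i j, 1 ≤ i → i ≤ n → 1 ≤ j → j ≤ n →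
      sfx T n (SA i) < sfx T n (SA j) → i < j := by
    intro i j hi1 hi2 hj1 hj2 h
    by_contra hle
    push_neg at hle
    rcases eq_or_lt_of_le hle with rfl | hlt
    · exact absurd h (lt_irrefl _)
    · exact absurd h (lt_asymm (hSAmono j i hj1 hlt hi2))
  refine ⟨h1, ?_, ?_⟩
  · rw [hd1]
    exact List.Lex.cons (hSAmono k p hk1 hp1 hp2)
  · intro q hq1 hq2 hq
    obtain ⟨i, hi1, hi2, rfl⟩ := hSAsurj q hq1 hq2
    obtain ⟨j, hj1, hj2, hj⟩ := hSAsurj (SA p - 1) (by omega) (by omega)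
    rw [← hj]
    by_contra hle
    have hlt : sfx T n (SA i) < sfx T n (SA j) := not_le.mp hle
    rw [hj, hd1] at hlt
    rw [sfx_cons T hq1 hq2] at hlt hq
    -- analyze the two comparisons
    have hce : T (SA i) = c ∧ sfx T n (SA k) < sfx T n (SA i + 1) ∧
        sfx T n (SA i + 1) < sfx T n (SA p) := by
      rcases cons_lt_cases hlt with h' | ⟨h', h''⟩
      · rcases cons_lt_cases hq with h2 | ⟨h2, _⟩
        · exact absurd h' (lt_asymm h2)
        · exact absurd h' (by rw [← h2]; exact lt_irrefl _)
      · rcases cons_lt_cases hq with h2 | ⟨h2, h3⟩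
        · exact absurd h2 (by rw [h']; exact lt_irrefl _)
        · exact ⟨h', h3, h''⟩
    obtain ⟨hce, htail1, htail2⟩ := hce
    have hSAin : SA i ≠ n := by
      intro h
      rw [h, hTn] at hce
      exact hc hce.symm
    obtain ⟨m, hm1, hm2, hm⟩ := hSAsurj (SA i + 1) (by omega) (by omega)
    rw [← hm] at htail1 htail2
    have hkm : k < m := key k m hk1 hk2 hm1 hm2 htail1
    have hmp : m < p := key m p hm1 hm2 (by omega) hp2 htail2
    have hbm : bwt T SA dollar m = c := by
      rw [bwt, if_neg (by omega)]
      have : SA m - 1 = SA i := by omega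
      rw [this, hce]
    exact absurd (hpmin m hkm hm2 hbm) (by omega)
end

section
/- Let P be a string whose SA-interval is the nonempty integer interval {j,...,k}, and let c be a character with c ≠ $. Then the SA-interval of the string cP (the concatenation of c with P) equals the integer interval {C(c) + rank_c(j−1) + 1, ..., C(c) + rank_c(k)}, which is empty exactly when rank_c(j−1) = rank_c(k), i.e., when c does not occur in BWT[j..k]. -/
variable {α : Type*} [LinearOrder α]

lemma myLex.cons_lt_cons_iff {a b : α} {s t : List α} :
    a :: s < b :: t ↔ a < b ∨ (a = b ∧ s < t) := by
  constructor
  · intro h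
    cases h with
    | cons h => exact Or.inr ⟨rfl, h⟩
    | rel h => exact Or.inl h
  · rintro (h | ⟨rfl, h⟩)
    · exact List.Lex.rel h
    · exact List.Lex.cons h

lemma myLex.cons_le_cons_iff {a : α} {s t : List α} :
    a :: s ≤ a :: t ↔ s ≤ t := by
  rw [← not_lt, ← not_lt, myLex.cons_lt_cons_iff]
  simp

lemma myLex.between {Q u y z : List α} (hu : Q <+: u) (hy : y ≤ u)
    (hny : ¬ Q <+: y) (hz : Q <+: z) : y < z := by
  induction Q generalizing u y z with
  | nil => exact absurd (List.nil_prefix) hny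
  | cons a Q ih =>
    obtain ⟨u', hu'⟩ := hu
    obtain ⟨z', hz'⟩ := hz
    subst hu' hz'
    cases y with
    | nil => exact List.nil_lt_cons _ _
    | cons b y =>
      rcases lt_or_eq_of_le hy with hy | hy
      · rcases myLex.cons_lt_cons_iff.1 hy with h | ⟨rfl, h⟩
        · exact List.Lex.rel h
        · by_cases hQ : Q <+: y
          · exact absurd (List.cons_prefix_cons.2 ⟨rfl, hQ⟩) hny
          · exact List.Lex.cons (ih (List.prefix_append _ _) (le_of_lt h) hQ (List.prefix_append _ _))
      · simp only [List.cons_append, List.cons.injEq] at hy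
        obtain ⟨rfl, rfl⟩ := hy
        exact absurd (List.cons_prefix_cons.2 ⟨rfl, List.prefix_append _ _⟩) hny

lemma sfx_cons_eq (T : ℕ → α) {n p : ℕ} (h : p ≤ n) :
    sfx T n p = T p :: sfx T n (p + 1) := by
  unfold sfx
  have h1 : n + 1 - p = (n - p) + 1 := by omega
  have h2 : n + 1 - (p + 1) = n - p := by omega
  rw [h1, h2, List.range_succ_eq_map, List.map_cons, List.map_map]
  congr 1
  apply List.map_congr_left
  intro d _
  simp only [Function.comp_apply, Nat.succ_eq_add_one]
  congr 1
  omega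

/-- **backward search.**  If `{j,...,k}` is the nonempty SA-interval of
`P` and `c ≠ $`, then the SA-interval of `cP` is exactly
`{C(c) + rank_c(j-1) + 1, ..., C(c) + rank_c(k)}`, which is empty exactly when
`rank_c(j-1) = rank_c(k)`, i.e. when `c` does not occur in `BWT[j..k]`. -/
theorem statement11
    (n : ℕ) (T : ℕ → α) (dollar : α) (SA : ℕ → ℕ)
    -- `T[1..n]` is a string of length `n ≥ 1` ending with `$`,
    -- which is smaller than every other character and occurs only at position `n`
    (hn : 1 ≤ n) (hTn : T n = dollar)
    (hdollar : ∀ p, 1 ≤ p → p < n → dollar < T p)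
    -- `SA` is a permutation of `{1,...,n}` sorting the suffixes lexicographically
    (hSAran : ∀ i, 1 ≤ i → i ≤ n → 1 ≤ SA i ∧ SA i ≤ n)
    (hSAsurj : ∀ p, 1 ≤ p → p ≤ n → ∃ i, 1 ≤ i ∧ i ≤ n ∧ SA i = p)
    (hSAmono : ∀ i j, 1 ≤ i → i < j → j ≤ n → sfx T n (SA i) < sfx T n (SA j))
    (P : List α) (j k : ℕ) (hjk : j ≤ k)
    -- `{j,...,k}` is the SA-interval of `P` (nonempty since `j ≤ k`)
    (hint : ∀ i, (1 ≤ i ∧ i ≤ n ∧ P <+: sfx T n (SA i)) ↔ (j ≤ i ∧ i ≤ k))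
    (c : α) (hc : c ≠ dollar) :
    (∀ i, (1 ≤ i ∧ i ≤ n ∧ (c :: P) <+: sfx T n (SA i)) ↔
        (((Finset.Icc 1 n).filter (fun p => T p < c)).card +
           ((Finset.Icc 1 (j - 1)).filter (fun p => bwt T SA dollar p = c)).card + 1 ≤ i ∧
         i ≤ ((Finset.Icc 1 n).filter (fun p => T p < c)).card +
           ((Finset.Icc 1 k).filter (fun p => bwt T SA dollar p = c)).card)) ∧
    (((Finset.Icc 1 (j - 1)).filter (fun p => bwt T SA dollar p = c)).card =
        ((Finset.Icc 1 k).filter (fun p => bwt T SA dollar p = c)).card ↔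
      ∀ i, j ≤ i → i ≤ k → bwt T SA dollar i ≠ c) := by
  classical
  obtain ⟨hj1, hjn, hPj⟩ := (hint j).2 ⟨le_refl j, hjk⟩
  obtain ⟨hk1, hkn, hPk⟩ := (hint k).2 ⟨hjk, le_refl k⟩
  -- injectivity of SA
  have hSAinj : ∀ i1 i2, 1 ≤ i1 → i1 ≤ n → 1 ≤ i2 → i2 ≤ n → SA i1 = SA i2 → i1 = i2 := by
    intro i1 i2 h1 h2 h3 h4 h5
    by_contra hne
    rcases Nat.lt_or_ge i1 i2 with h | h
    · have := hSAmono i1 i2 h1 h h4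
      rw [h5] at this
      exact lt_irrefl _ this
    · have := hSAmono i2 i1 h3 (lt_of_le_of_ne h fun e => hne e.symm) h2
      rw [h5] at this
      exact lt_irrefl _ this
  -- an inverse for SA
  have hex : ∀ p, ∃ i, (1 ≤ p ∧ p ≤ n) → 1 ≤ i ∧ i ≤ n ∧ SA i = p := by
    intro p
    by_cases h : 1 ≤ p ∧ p ≤ n
    · obtain ⟨i, hi⟩ := hSAsurj p h.1 h.2
      exact ⟨i, fun _ => hi⟩
    · exact ⟨0, fun h' => absurd h' h⟩
  choose f hf using hex
  -- order transfer
  have hlt_iff : ∀ i1 i2, 1 ≤ i1 → i1 ≤ n → 1 ≤ i2 → i2 ≤ n →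
      (i1 < i2 ↔ sfx T n (SA i1) < sfx T n (SA i2)) := by
    intro i1 i2 h1 h2 h3 h4
    constructor
    · intro h
      exact hSAmono i1 i2 h1 h h4
    · intro h
      by_contra hle
      push_neg at hle
      rcases lt_or_eq_of_le hle with h' | h'
      · have := hSAmono i2 i1 h3 h' h2
        exact lt_irrefl _ (h.trans this)
      · rw [h'] at h
        exact lt_irrefl _ h
  have hle_iff : ∀ i1 i2, 1 ≤ i1 → i1 ≤ n → 1 ≤ i2 → i2 ≤ n →
      (i1 ≤ i2 ↔ sfx T n (SA i1) ≤ sfx T n (SA i2)) := by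
    intro i1 i2 h1 h2 h3 h4
    rw [← not_lt, ← not_lt, hlt_iff i2 i1 h3 h4 h1 h2]
  -- prefix characterization
  have hQiff : ∀ p, 1 ≤ p → p ≤ n →
      ((c :: P) <+: sfx T n p ↔ p < n ∧ T p = c ∧ P <+: sfx T n (p + 1)) := by
    intro p hp1 hpn
    rw [sfx_cons_eq T hpn, List.cons_prefix_cons]
    constructor
    · rintro ⟨h1, hP⟩
      refine ⟨?_, h1.symm, hP⟩
      rcases lt_or_eq_of_le hpn with h | h
      · exact h
      · subst h
        exact absurd (h1.trans hTn) hc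
    · rintro ⟨_, h2, h3⟩
      exact ⟨h2.symm, h3⟩
  have hbwt_iff : ∀ i, (bwt T SA dollar i = c ↔ SA i ≠ 1 ∧ T (SA i - 1) = c) := by
    intro i
    unfold bwt
    by_cases h : SA i = 1
    · simp only [h, if_true]
      simp [hc.symm, Ne.symm hc]
    · simp [h]
  -- names for the sets
  set Cs := (Finset.Icc 1 n).filter (fun p => T p < c) with hCs
  set A1 := (Finset.Icc 1 (j - 1)).filter (fun p => bwt T SA dollar p = c) with hA1
  set Ak := (Finset.Icc 1 k).filter (fun p => bwt T SA dollar p = c) with hAkdef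
  set A2 := (Finset.Icc j k).filter (fun p => bwt T SA dollar p = c) with hA2
  set B := (Finset.Icc 1 n).filter (fun p => (c :: P) <+: sfx T n p) with hB
  set S := (Finset.Icc 1 n).filter (fun i => (c :: P) <+: sfx T n (SA i)) with hS
  have hAksplit : Ak.card = A1.card + A2.card := by
    have hU : Finset.Icc 1 k = Finset.Icc 1 (j - 1) ∪ Finset.Icc j k := by
      ext p
      simp only [Finset.mem_Icc, Finset.mem_union]
      omega
    rw [hAkdef, hU, Finset.filter_union, Finset.card_union_of_disjoint]
    rw [Finset.disjoint_left]
    intro a ha hb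
    rw [Finset.mem_filter, Finset.mem_Icc] at ha hb
    omega
  -- S and B have the same cardinality
  have hSB : S.card = B.card := by
    apply Finset.card_bij (fun i _ => SA i)
    · intro a ha
      rw [hS, Finset.mem_filter, Finset.mem_Icc] at ha
      obtain ⟨⟨h1, h2⟩, h3⟩ := ha
      obtain ⟨h4, h5⟩ := hSAran a h1 h2
      rw [hB, Finset.mem_filter, Finset.mem_Icc]
      exact ⟨⟨h4, h5⟩, h3⟩
    · intro a ha b hb h
      rw [hS, Finset.mem_filter, Finset.mem_Icc] at ha hb
      exact hSAinj a b ha.1.1 ha.1.2 hb.1.1 hb.1.2 h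
    · intro p hp
      rw [hB, Finset.mem_filter, Finset.mem_Icc] at hp
      obtain ⟨⟨h1, h2⟩, h3⟩ := hp
      obtain ⟨h4, h5, h6⟩ := hf p ⟨h1, h2⟩
      refine ⟨f p, ?_, h6⟩
      rw [hS, Finset.mem_filter, Finset.mem_Icc]
      rw [h6]
      exact ⟨⟨h4, h5⟩, h3⟩
  -- A2 and B have the same cardinality
  have hA2B : A2.card = B.card := by
    apply Finset.card_bij (fun i _ => SA i - 1)
    · intro a ha
      rw [hA2, Finset.mem_filter, Finset.mem_Icc] at ha
      obtain ⟨⟨hja, hak⟩, hbc⟩ := ha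
      have ha1 : 1 ≤ a := le_trans hj1 hja
      have han : a ≤ n := le_trans hak hkn
      obtain ⟨hs1, hs2⟩ := hSAran a ha1 han
      obtain ⟨hne1, hTc⟩ := (hbwt_iff a).1 hbc
      have hpre := ((hint a).2 ⟨hja, hak⟩).2.2
      rw [hB, Finset.mem_filter, Finset.mem_Icc]
      have hpn : SA a - 1 ≤ n := by omega
      refine ⟨⟨by omega, hpn⟩, ?_⟩
      rw [sfx_cons_eq T hpn, List.cons_prefix_cons]
      have hplus : SA a - 1 + 1 = SA a := by omega
      rw [hplus, hTc]
      exact ⟨rfl, hpre⟩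
    · intro a ha b hb h
      rw [hA2, Finset.mem_filter, Finset.mem_Icc] at ha hb
      have ha1 : 1 ≤ a := le_trans hj1 ha.1.1
      have han : a ≤ n := le_trans ha.1.2 hkn
      have hb1 : 1 ≤ b := le_trans hj1 hb.1.1
      have hbn : b ≤ n := le_trans hb.1.2 hkn
      have hea := ((hbwt_iff a).1 ha.2).1
      have heb := ((hbwt_iff b).1 hb.2).1
      have h2a := (hSAran a ha1 han).1
      have h2b := (hSAran b hb1 hbn).1
      have : SA a = SA b := by omega
      exact hSAinj a b ha1 han hb1 hbn this
    · intro p hp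
      rw [hB, Finset.mem_filter, Finset.mem_Icc] at hp
      obtain ⟨⟨h1, h2⟩, h3⟩ := hp
      obtain ⟨hplt, hTc, hPp⟩ := (hQiff p h1 h2).1 h3
      obtain ⟨h4, h5, h6⟩ := hf (p + 1) ⟨by omega, by omega⟩
      have hji : j ≤ f (p + 1) ∧ f (p + 1) ≤ k := by
        apply (hint (f (p + 1))).1
        rw [h6]
        exact ⟨h4, h5, hPp⟩
      refine ⟨f (p + 1), ?_, by rw [h6]; omega⟩
      rw [hA2, Finset.mem_filter, Finset.mem_Icc]
      refine ⟨⟨hji.1, hji.2⟩, ?_⟩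
      rw [hbwt_iff, h6]
      constructor
      · omega
      · simpa using hTc
  -- counting identity
  have hcount : ∀ i, 1 ≤ i → i ≤ n →
      ((Finset.Icc 1 n).filter (fun p => sfx T n p ≤ sfx T n (SA i))).card = i := by
    intro i h1 h2
    have hbij : (Finset.Icc 1 i).card =
        ((Finset.Icc 1 n).filter (fun p => sfx T n p ≤ sfx T n (SA i))).card := by
      apply Finset.card_bij (fun i' _ => SA i')
      · intro a ha
        rw [Finset.mem_Icc] at ha
        obtain ⟨h3, h4⟩ := hSAran a ha.1 (ha.2.trans h2)
        rw [Finset.mem_filter, Finset.mem_Icc]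
        exact ⟨⟨h3, h4⟩, (hle_iff a i ha.1 (ha.2.trans h2) h1 h2).1 ha.2⟩
      · intro a ha b hb h
        rw [Finset.mem_Icc] at ha hb
        exact hSAinj a b ha.1 (ha.2.trans h2) hb.1 (hb.2.trans h2) h
      · intro p hp
        rw [Finset.mem_filter, Finset.mem_Icc] at hp
        obtain ⟨⟨hp1, hpn⟩, hple⟩ := hp
        obtain ⟨hf1, hf2, hf3⟩ := hf p ⟨hp1, hpn⟩
        refine ⟨f p, ?_, hf3⟩
        rw [Finset.mem_Icc]
        refine ⟨hf1, ?_⟩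
        rw [hle_iff (f p) i hf1 hf2 h1 h2, hf3]
        exact hple
    rw [← hbij, Nat.card_Icc]
    omega
  -- main membership bounds
  have hmem : ∀ i, 1 ≤ i → i ≤ n → (c :: P) <+: sfx T n (SA i) →
      (Cs.card + A1.card + 1 ≤ i ∧ i ≤ Cs.card + Ak.card) := by
    intro i h1 h2 hpre
    obtain ⟨hSAi1, hSAi2⟩ := hSAran i h1 h2
    obtain ⟨hSAilt, hTc, hPs⟩ := (hQiff (SA i) hSAi1 hSAi2).1 hpre
    obtain ⟨hi''1, hi''2, hi''3⟩ := hf (SA i + 1) ⟨by omega, by omega⟩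
    have hji'' : j ≤ f (SA i + 1) ∧ f (SA i + 1) ≤ k := by
      apply (hint (f (SA i + 1))).1
      rw [hi''3]
      exact ⟨hi''1, hi''2, hPs⟩
    have hxeq : sfx T n (SA i) = c :: sfx T n (SA i + 1) := by
      rw [sfx_cons_eq T hSAi2, hTc]
    have hkey := hcount i h1 h2
    constructor
    · -- lower bound
      set E := (Cs ∪ A1.image (fun i' => SA i' - 1)) ∪ {SA i} with hE
      have hA1fact : ∀ a ∈ A1, 2 ≤ SA a ∧ SA a ≤ n ∧ T (SA a - 1) = c ∧
          sfx T n (SA a - 1) < sfx T n (SA i) := by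
        intro a ha
        rw [hA1, Finset.mem_filter, Finset.mem_Icc] at ha
        obtain ⟨⟨ha1, ha2⟩, hbc⟩ := ha
        have han : a ≤ n := by omega
        obtain ⟨hs1, hs2⟩ := hSAran a ha1 han
        obtain ⟨hne1, hTca⟩ := (hbwt_iff a).1 hbc
        refine ⟨by omega, hs2, hTca, ?_⟩
        have hlt : a < f (SA i + 1) := by omega
        have hslt := (hlt_iff a (f (SA i + 1)) ha1 han hi''1 hi''2).1 hlt
        rw [hi''3] at hslt
        have hpn : SA a - 1 ≤ n := by omega
        rw [sfx_cons_eq T hpn, hxeq]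
        have hplus : SA a - 1 + 1 = SA a := by omega
        rw [hplus, hTca]
        exact List.Lex.cons hslt
      have hEsub : E ⊆ (Finset.Icc 1 n).filter (fun p => sfx T n p ≤ sfx T n (SA i)) := by
        intro p hp
        rw [hE, Finset.mem_union, Finset.mem_union] at hp
        rcases hp with (hp | hp) | hp
        · rw [hCs, Finset.mem_filter, Finset.mem_Icc] at hp
          obtain ⟨⟨hp1, hpn⟩, hplt⟩ := hp
          rw [Finset.mem_filter, Finset.mem_Icc]
          refine ⟨⟨hp1, hpn⟩, le_of_lt ?_⟩
          rw [sfx_cons_eq T hpn, hxeq]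
          exact List.Lex.rel hplt
        · rw [Finset.mem_image] at hp
          obtain ⟨a, ha, rfl⟩ := hp
          obtain ⟨hq1, hq2, hq3, hq4⟩ := hA1fact a ha
          rw [Finset.mem_filter, Finset.mem_Icc]
          exact ⟨⟨by omega, by omega⟩, le_of_lt hq4⟩
        · rw [Finset.mem_singleton] at hp
          subst hp
          rw [Finset.mem_filter, Finset.mem_Icc]
          exact ⟨⟨hSAi1, hSAi2⟩, le_refl _⟩
      have hd1 : Disjoint Cs (A1.image (fun i' => SA i' - 1)) := by
        rw [Finset.disjoint_left]
        intro a ha hb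
        rw [hCs, Finset.mem_filter] at ha
        rw [Finset.mem_image] at hb
        obtain ⟨b, hb, rfl⟩ := hb
        obtain ⟨_, _, hq3, _⟩ := hA1fact b hb
        rw [hq3] at ha
        exact lt_irrefl _ ha.2
      have hd2 : Disjoint (Cs ∪ A1.image (fun i' => SA i' - 1)) {SA i} := by
        rw [Finset.disjoint_right]
        intro a ha hb
        rw [Finset.mem_singleton] at ha
        subst ha
        rw [Finset.mem_union] at hb
        rcases hb with hb | hb
        · rw [hCs, Finset.mem_filter] at hb
          rw [hTc] at hb
          exact lt_irrefl _ hb.2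
        · rw [Finset.mem_image] at hb
          obtain ⟨b, hb, hbe⟩ := hb
          obtain ⟨_, _, _, hq4⟩ := hA1fact b hb
          rw [hbe] at hq4
          exact lt_irrefl _ hq4
      have hinjA1 : Set.InjOn (fun i' => SA i' - 1) A1 := by
        intro a ha b hb h
        have ha' := Finset.mem_coe.1 ha
        have hb' := Finset.mem_coe.1 hb
        obtain ⟨h2a, _, _, _⟩ := hA1fact a ha'
        obtain ⟨h2b, _, _, _⟩ := hA1fact b hb'
        rw [hA1, Finset.mem_filter, Finset.mem_Icc] at ha' hb'
        simp only at h
        have hSAeq : SA a = SA b := by omega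
        exact hSAinj a b ha'.1.1 (by omega) hb'.1.1 (by omega) hSAeq
      have hEcard : E.card = Cs.card + A1.card + 1 := by
        rw [hE, Finset.card_union_of_disjoint hd2, Finset.card_union_of_disjoint hd1,
          Finset.card_image_of_injOn hinjA1, Finset.card_singleton]
      calc Cs.card + A1.card + 1 = E.card := hEcard.symm
        _ ≤ ((Finset.Icc 1 n).filter (fun p => sfx T n p ≤ sfx T n (SA i))).card :=
            Finset.card_le_card hEsub
        _ = i := hkey
    · -- upper bound
      have hsubset : (Finset.Icc 1 n).filter (fun p => sfx T n p ≤ sfx T n (SA i)) ⊆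
          Cs ∪ (Finset.Icc 1 n).filter (fun p => T p = c ∧ sfx T n p ≤ sfx T n (SA i)) := by
        intro p hp
        rw [Finset.mem_filter, Finset.mem_Icc] at hp
        obtain ⟨⟨hp1, hpn⟩, hple⟩ := hp
        have hTple : T p ≤ c := by
          by_contra hgt
          push_neg at hgt
          have hlt : sfx T n (SA i) < sfx T n p := by
            rw [hxeq, sfx_cons_eq T hpn]
            exact List.Lex.rel hgt
          exact absurd hple (not_le.2 hlt)
        rw [Finset.mem_union]
        rcases lt_or_eq_of_le hTple with h | h
        · left
          rw [hCs, Finset.mem_filter, Finset.mem_Icc]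
          exact ⟨⟨hp1, hpn⟩, h⟩
        · right
          rw [Finset.mem_filter, Finset.mem_Icc]
          exact ⟨⟨hp1, hpn⟩, h, hple⟩
      have hD : ((Finset.Icc 1 n).filter
          (fun p => T p = c ∧ sfx T n p ≤ sfx T n (SA i))).card ≤ Ak.card := by
        apply Finset.card_le_card_of_injOn (fun p => f (p + 1))
        · intro p hp
          rw [Finset.mem_coe, Finset.mem_filter, Finset.mem_Icc] at hp
          obtain ⟨⟨hp1, hpn⟩, hTp, hple⟩ := hp
          have hplt : p < n := by
            rcases lt_or_eq_of_le hpn with h | h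
            · exact h
            · subst h
              exact absurd (hTp.symm.trans hTn) hc
          obtain ⟨hq1, hq2, hq3⟩ := hf (p + 1) ⟨by omega, by omega⟩
          have hle' : sfx T n (p + 1) ≤ sfx T n (SA i + 1) := by
            rw [hxeq, sfx_cons_eq T hpn, hTp] at hple
            exact myLex.cons_le_cons_iff.1 hple
          have hfk : f (p + 1) ≤ k := by
            by_cases hPp : P <+: sfx T n (p + 1)
            · refine ((hint (f (p + 1))).1 ⟨hq1, hq2, ?_⟩).2
              rw [hq3]
              exact hPp
            · have hlt2 : sfx T n (p + 1) < sfx T n (SA j) := myLex.between hPs hle' hPp hPj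
              have hfj : f (p + 1) < j := by
                by_contra hge
                push_neg at hge
                have := (hle_iff j (f (p + 1)) hj1 hjn hq1 hq2).1 hge
                rw [hq3] at this
                exact absurd hlt2 (not_lt.2 this)
              omega
          rw [hAkdef, Finset.mem_coe, Finset.mem_filter, Finset.mem_Icc]
          refine ⟨⟨hq1, hfk⟩, ?_⟩
          rw [hbwt_iff, hq3]
          refine ⟨by omega, ?_⟩
          exact hTp
        · intro p1 hp1 p2 hp2 heq
          have hm1 := Finset.mem_coe.1 hp1
          have hm2 := Finset.mem_coe.1 hp2
          rw [Finset.mem_filter, Finset.mem_Icc] at hm1 hm2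
          have hn1 : p1 < n := by
            rcases lt_or_eq_of_le hm1.1.2 with h | h
            · exact h
            · subst h
              exact absurd (hm1.2.1.symm.trans hTn) hc
          have hn2 : p2 < n := by
            rcases lt_or_eq_of_le hm2.1.2 with h | h
            · exact h
            · subst h
              exact absurd (hm2.2.1.symm.trans hTn) hc
          have e1 := (hf (p1 + 1) ⟨by omega, by omega⟩).2.2
          have e2 := (hf (p2 + 1) ⟨by omega, by omega⟩).2.2
          simp only at heq
          have : p1 + 1 = p2 + 1 := by rw [← e1, ← e2, heq]
          omega
      calc i = ((Finset.Icc 1 n).filter (fun p => sfx T n p ≤ sfx T n (SA i))).card := hkey.symm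
        _ ≤ (Cs ∪ (Finset.Icc 1 n).filter
              (fun p => T p = c ∧ sfx T n p ≤ sfx T n (SA i))).card :=
            Finset.card_le_card hsubset
        _ ≤ Cs.card + ((Finset.Icc 1 n).filter
              (fun p => T p = c ∧ sfx T n p ≤ sfx T n (SA i))).card :=
            Finset.card_union_le _ _
        _ ≤ Cs.card + Ak.card := by omega
  -- the interval equality
  have hScard : S.card = A2.card := hSB.trans hA2B.symm
  have hSsub : S ⊆ Finset.Icc (Cs.card + A1.card + 1) (Cs.card + Ak.card) := by
    intro i hi
    rw [hS, Finset.mem_filter, Finset.mem_Icc] at hi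
    obtain ⟨⟨h1, h2⟩, h3⟩ := hi
    rw [Finset.mem_Icc]
    exact hmem i h1 h2 h3
  have hIcc_card : (Finset.Icc (Cs.card + A1.card + 1) (Cs.card + Ak.card)).card = A2.card := by
    rw [Nat.card_Icc]
    omega
  have hSeq : S = Finset.Icc (Cs.card + A1.card + 1) (Cs.card + Ak.card) := by
    apply Finset.eq_of_subset_of_card_le hSsub
    rw [hIcc_card, ← hScard]
  constructor
  · intro i
    constructor
    · rintro ⟨h1, h2, h3⟩
      have : i ∈ S := by
        rw [hS, Finset.mem_filter, Finset.mem_Icc]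
        exact ⟨⟨h1, h2⟩, h3⟩
      rw [hSeq, Finset.mem_Icc] at this
      exact this
    · rintro ⟨h1, h2⟩
      have : i ∈ S := by
        rw [hSeq, Finset.mem_Icc]
        exact ⟨h1, h2⟩
      rw [hS, Finset.mem_filter, Finset.mem_Icc] at this
      exact ⟨this.1.1, this.1.2, this.2⟩
  · constructor
    · intro h i hji hik hbc
      have h0 : A2.card = 0 := by omega
      rw [Finset.card_eq_zero] at h0
      have : i ∈ A2 := by
        rw [hA2, Finset.mem_filter, Finset.mem_Icc]
        exact ⟨⟨hji, hik⟩, hbc⟩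
      rw [h0] at this
      exact absurd this (Finset.notMem_empty i)
    · intro h
      have h0 : A2 = ∅ := by
        rw [Finset.eq_empty_iff_forall_notMem]
        intro a ha
        rw [hA2, Finset.mem_filter, Finset.mem_Icc] at ha
        exact h a ha.1.1 ha.1.2 ha.2
      have : A2.card = 0 := by rw [h0]; rfl
      omega
end
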